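/- Let 𝓟 ⊂ ℝ³ be the polytope defined by x₁, x₂, x₃ ≥ 0, x₁ + x₂ ≤ 3, x₂ + x₃ ≤ 3, x₁ + x₂ + x₃ ≤ 4. Then 𝓟 is not the set of independent vectors of any discrete polymatroid on {1,2,3}; equivalently, the set of lattice points of 𝓟 is not a discrete polymatroid, because the maximal lattice points (0,3,0) and (1,2,1) of 𝓟 (with respect to the componentwise order) have different coordinate sums. -/

import Mathlib

open Finset

/-- A discrete polymatroid on `[d]`: a nonempty finite set of nonnegative integer
vectors, downward closed, with the exchange property. -/
def IsDiscretePolymatroid {d : ℕ} (P : Set (Fin d → ℤ)) : Prop :=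
  P.Nonempty ∧ P.Finite ∧ (∀ u ∈ P, ∀ i, 0 ≤ u i) ∧
    (∀ u ∈ P, ∀ v : Fin d → ℤ, (∀ i, 0 ≤ v i) → (∀ i, v i ≤ u i) → v ∈ P) ∧
    (∀ u ∈ P, ∀ v ∈ P, (∑ i, u i) < (∑ i, v i) →
      ∃ i, u i < v i ∧ u + Pi.single i 1 ∈ P)

theorem stmt_7 :
    ¬ IsDiscretePolymatroid
      {u : Fin 3 → ℤ | (∀ i, 0 ≤ u i) ∧ u 0 + u 1 ≤ 3 ∧ u 1 + u 2 ≤ 3 ∧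
        u 0 + u 1 + u 2 ≤ 4} := by
  rintro ⟨-, -, -, -, hex⟩
  have hu : (![0, 3, 0] : Fin 3 → ℤ) ∈
      {u : Fin 3 → ℤ | (∀ i, 0 ≤ u i) ∧ u 0 + u 1 ≤ 3 ∧ u 1 + u 2 ≤ 3 ∧
        u 0 + u 1 + u 2 ≤ 4} := by
    refine ⟨fun i => ?_, by norm_num, by decide, by decide⟩
    fin_cases i <;> norm_num
  have hv : (![1, 2, 1] : Fin 3 → ℤ) ∈
      {u : Fin 3 → ℤ | (∀ i, 0 ≤ u i) ∧ u 0 + u 1 ≤ 3 ∧ u 1 + u 2 ≤ 3 ∧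
        u 0 + u 1 + u 2 ≤ 4} := by
    refine ⟨fun i => ?_, by norm_num, by decide, by decide⟩
    fin_cases i <;> norm_num
  obtain ⟨i, hi, hmem⟩ := hex _ hu _ hv (by simp [Fin.sum_univ_three])
  obtain ⟨-, h1, h2, -⟩ := hmem
  fin_cases i <;> simp_all [Pi.single_apply]
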